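/- arXiv:2006.07632 — 2 statements merged into one kernel-verified Lean document; each statement's English description precedes it below -/
import Mathlib

section
/- Let G be a finite symmetric (arc-transitive) graph, λ an eigenvalue of the normalized Laplacian with eigenspace of dimension m, and {u₁,…,u_m} an orthonormal basis of the eigenspace. Then the function on edges g(x,y) := Σ_{α=1}^m |u_α(y) − u_α(x)|² (for x ∼ y) is constant with value mλ/#E. -/
open Finset Real

/-- Normalized Laplace operator of a `d`-regular graph: `Δu(x) = (1/d)·Σ_{y∼x}(u y − u x)`. -/
noncomputable def nlap {V : Type*} [Fintype V] (G : SimpleGraph V) [DecidableRel G.Adj] (d : ℕ)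
    (u : V → ℝ) (x : V) : ℝ :=
  (1 / (d : ℝ)) * ∑ y ∈ G.neighborFinset x, (u y - u x)

/-- `l` is an eigenvalue of the normalized Laplacian: `Δu + l·u = 0` for some `u ≠ 0`. -/
def isEig {V : Type*} [Fintype V] (G : SimpleGraph V) [DecidableRel G.Adj] (d : ℕ)
    (l : ℝ) : Prop :=
  ∃ u : V → ℝ, u ≠ 0 ∧ ∀ x, nlap G d u x + l * u x = 0

section aux

variable {V : Type*} [Fintype V] [DecidableEq V] (G : SimpleGraph V) [DecidableRel G.Adj]

/-- Swapping the two arguments in a sum over directed edges. -/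
lemma swap_sum (F : V → V → ℝ) :
    ∑ x, ∑ y ∈ G.neighborFinset x, F x y = ∑ x, ∑ y ∈ G.neighborFinset x, F y x := by
  have h : ∀ (H : V → V → ℝ), (∑ x, ∑ y ∈ G.neighborFinset x, H x y)
      = ∑ x, ∑ y, if G.Adj x y then H x y else 0 := by
    intro H
    refine Finset.sum_congr rfl fun x _ => ?_
    rw [SimpleGraph.neighborFinset_eq_filter, Finset.sum_filter]
  rw [h, h]
  rw [Finset.sum_comm]
  refine Finset.sum_congr rfl fun x _ => Finset.sum_congr rfl fun y _ => ?_
  exact if_congr (G.adj_comm y x) rfl rfl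

/-- The normalized Laplacian commutes with graph automorphisms. -/
lemma nlap_comp (d : ℕ) (γ : G ≃g G) (w : V → ℝ) (x : V) :
    nlap G d (fun z => w (γ z)) x = nlap G d w (γ x) := by
  unfold nlap
  congr 1
  refine Finset.sum_nbij' (fun y => γ y) (fun z => γ.symm z) ?_ ?_ ?_ ?_ ?_
  · intro a ha
    rw [SimpleGraph.mem_neighborFinset] at ha ⊢
    exact γ.map_rel_iff.mpr ha
  · intro a ha
    rw [SimpleGraph.mem_neighborFinset] at ha ⊢
    have : G.Adj (γ (γ.symm (γ x))) (γ (γ.symm a)) := by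
      simpa using ha
    exact γ.map_rel_iff.mp (by simpa using this)
  · intro a _; simp
  · intro a _; simp
  · intro a _; rfl

end aux

/-- Key invariance: the reproducing kernel `K(p,q) = Σ_α u_α(p)u_α(q)` of an eigenspace with
an orthonormal basis is invariant under graph automorphisms. -/
lemma kernel_inv {V : Type*} [Fintype V] [DecidableEq V] (G : SimpleGraph V)
    [DecidableRel G.Adj] (d m : ℕ) (hd : 0 < d) (l : ℝ)
    (u : Fin m → V → ℝ)
    (hmem : ∀ α, ∀ z, nlap G d (u α) z + l * u α z = 0)
    (hspan : ∀ v : V → ℝ, (∀ z, nlap G d v z + l * v z = 0) →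
      v ∈ Submodule.span ℝ (Set.range u))
    (horth : ∀ α β, (d : ℝ) * ∑ x, u α x * u β x = if α = β then 1 else 0)
    (γ : G ≃g G) (p q : V) :
    ∑ α, u α (γ p) * u α (γ q) = ∑ α, u α p * u α q := by
  have hdR : (d : ℝ) ≠ 0 := Nat.cast_ne_zero.mpr hd.ne'
  set v : Fin m → V → ℝ := fun α z => u α (γ z) with hv
  have hveig : ∀ α z, nlap G d (v α) z + l * v α z = 0 := by
    intro α z
    have := nlap_comp G d γ (u α) z
    rw [hv]
    simpa [this] using hmem α (γ z)
  have hc : ∀ α, ∃ c : Fin m → ℝ, ∑ i, c i • u i = v α := by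
    intro α
    exact (Submodule.mem_span_range_iff_exists_fun ℝ).mp (hspan (v α) (hveig α))
  choose c hc using hc
  have hvx : ∀ α x, v α x = ∑ i, c α i * u i x := by
    intro α x
    have := congrFun (hc α) x
    simpa [Finset.sum_apply] using this.symm
  -- orthonormality of v
  have hvorth : ∀ α β, (d : ℝ) * ∑ x, v α x * v β x = if α = β then 1 else 0 := by
    intro α β
    have : ∑ x, v α x * v β x = ∑ x, u α x * u β x :=
      Equiv.sum_comp γ.toEquiv (fun x => u α x * u β x)
    rw [this]; exact horth α β
  -- ⟨v α, u j⟩ = c α j / d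
  have hvu : ∀ α j, ∑ x, v α x * u j x = c α j / d := by
    intro α j
    calc ∑ x, v α x * u j x = ∑ x, ∑ i, c α i * (u i x * u j x) := by
          refine Finset.sum_congr rfl fun x _ => ?_
          rw [hvx, Finset.sum_mul]
          exact Finset.sum_congr rfl fun i _ => by ring
      _ = ∑ i, c α i * ∑ x, u i x * u j x := by
          rw [Finset.sum_comm]
          exact Finset.sum_congr rfl fun i _ => (Finset.mul_sum _ _ _).symm
      _ = ∑ i, c α i * ((if i = j then 1 else 0) / d) := by
          refine Finset.sum_congr rfl fun i _ => ?_
          congr 1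
          field_simp
          rw [mul_comm]
          exact horth i j
      _ = c α j / d := by
          rw [Finset.sum_congr rfl (fun i _ => by
            rw [mul_div_assoc] : ∀ i ∈ Finset.univ, c α i * ((if i = j then 1 else 0) / (d:ℝ))
              = c α i * (if i = j then 1 else 0) / d)]
          rw [← Finset.sum_div]
          simp
  -- C * C.transpose = 1
  set C : Matrix (Fin m) (Fin m) ℝ := Matrix.of c with hC
  have hCCt : C * C.transpose = 1 := by
    ext α β
    have h1 : (C * C.transpose) α β = ∑ j, c α j * c β j := by
      simp [Matrix.mul_apply, hC]
    have h2 : ∑ x, v α x * v β x = ∑ j, c β j * (c α j / d) := by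
      calc ∑ x, v α x * v β x = ∑ x, ∑ j, c β j * (v α x * u j x) := by
            refine Finset.sum_congr rfl fun x _ => ?_
            rw [hvx β, Finset.mul_sum]
            exact Finset.sum_congr rfl fun j _ => by ring
        _ = ∑ j, c β j * ∑ x, v α x * u j x := by
            rw [Finset.sum_comm]
            exact Finset.sum_congr rfl fun j _ => (Finset.mul_sum _ _ _).symm
        _ = ∑ j, c β j * (c α j / d) := by
            exact Finset.sum_congr rfl fun j _ => by rw [hvu]
    have h3 := hvorth α β
    rw [h2] at h3
    have h4 : ∑ j, c α j * c β j = if α = β then 1 else 0 := by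
      rw [← h3, Finset.mul_sum]
      refine Finset.sum_congr rfl fun j _ => ?_
      field_simp
    rw [h1, h4]
    simp [Matrix.one_apply]
  have hCtC : C.transpose * C = 1 := mul_eq_one_comm.mp hCCt
  have hcol : ∀ i j, ∑ α, c α i * c α j = if i = j then 1 else 0 := by
    intro i j
    have := congrFun (congrFun hCtC i) j
    simpa [Matrix.mul_apply, Matrix.one_apply, hC, Matrix.transpose_apply] using this
  -- finally
  calc ∑ α, u α (γ p) * u α (γ q) = ∑ α, v α p * v α q := rfl
    _ = ∑ α, ∑ i, ∑ j, (c α i * c α j) * (u i p * u j q) := by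
        refine Finset.sum_congr rfl fun α _ => ?_
        rw [hvx α p, hvx α q, Finset.sum_mul_sum]
        exact Finset.sum_congr rfl fun i _ => Finset.sum_congr rfl fun j _ => by ring
    _ = ∑ i, ∑ j, (∑ α, c α i * c α j) * (u i p * u j q) := by
        rw [Finset.sum_comm]
        refine Finset.sum_congr rfl fun i _ => ?_
        rw [Finset.sum_comm]
        refine Finset.sum_congr rfl fun j _ => ?_
        rw [Finset.sum_mul]
    _ = ∑ i, u i p * u i q := by
        refine Finset.sum_congr rfl fun i _ => ?_
        rw [Finset.sum_congr rfl (fun j _ => by rw [hcol])]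
        simp

/-- On a finite symmetric (arc-transitive) `d`-regular graph, for an orthonormal basis
`u₁,…,u_m` of the eigenspace of an eigenvalue `l` of the normalized Laplacian, the function
`g(x,y) = Σ_α |u_α(y) − u_α(x)|²` on adjacent pairs is constant with value `m·l/#E`. -/
theorem stmt_8 {V : Type*} [Fintype V] [DecidableEq V] (G : SimpleGraph V)
    [DecidableRel G.Adj] (d m : ℕ) (hd : 0 < d) (hreg : ∀ x, G.degree x = d)
    (hsym : ∀ ⦃x y x' y' : V⦄, G.Adj x y → G.Adj x' y' →
      ∃ γ : G ≃g G, γ x = x' ∧ γ y = y')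
    (l : ℝ) (hl : isEig G d l)
    (u : Fin m → V → ℝ)
    (hmem : ∀ α, ∀ z, nlap G d (u α) z + l * u α z = 0)
    (hspan : ∀ v : V → ℝ, (∀ z, nlap G d v z + l * v z = 0) →
      v ∈ Submodule.span ℝ (Set.range u))
    (horth : ∀ α β, (d : ℝ) * ∑ x, u α x * u β x = if α = β then 1 else 0) :
    ∀ x y : V, G.Adj x y →
      ∑ α, (u α y - u α x) ^ 2 = (m : ℝ) * l / G.edgeFinset.card := by
  intro x y hxy
  have hdR : (d : ℝ) ≠ 0 := Nat.cast_ne_zero.mpr hd.ne'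
  -- expansion of g via the kernel
  have hexp : ∀ p q : V, ∑ α, (u α q - u α p) ^ 2
      = (∑ α, u α q * u α q) - 2 * (∑ α, u α p * u α q) + ∑ α, u α p * u α p := by
    intro p q
    have h : ∀ α, (u α q - u α p) ^ 2
        = u α q * u α q - 2 * (u α p * u α q) + u α p * u α p := fun α => by ring
    rw [Finset.sum_congr rfl fun α _ => h α, Finset.sum_add_distrib,
      Finset.sum_sub_distrib, ← Finset.mul_sum]
  -- constancy of g
  have hconst : ∀ x' y' : V, G.Adj x' y' →
      ∑ α, (u α y' - u α x') ^ 2 = ∑ α, (u α y - u α x) ^ 2 := by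
    intro x' y' hxy'
    obtain ⟨γ, hγx, hγy⟩ := hsym hxy hxy'
    have K := kernel_inv G d m hd l u hmem hspan horth γ
    rw [hexp, hexp, ← hγx, ← hγy, K y y, K x y, K x x]
  -- per-α directed-edge sum equals 2l
  have hnbr : ∀ α (z : V), ∑ y' ∈ G.neighborFinset z, (u α y' - u α z) = -((d : ℝ) * l * u α z) := by
    intro α z
    have h := hmem α z
    unfold nlap at h
    have h' : (1 / (d:ℝ)) * ∑ y' ∈ G.neighborFinset z, (u α y' - u α z) = -(l * u α z) := by
      linarith
    calc ∑ y' ∈ G.neighborFinset z, (u α y' - u α z)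
        = (d:ℝ) * ((1 / (d:ℝ)) * ∑ y' ∈ G.neighborFinset z, (u α y' - u α z)) := by
          field_simp
      _ = (d:ℝ) * (-(l * u α z)) := by rw [h']
      _ = -((d : ℝ) * l * u α z) := by ring
  have hS : ∀ α, ∑ z, ∑ y' ∈ G.neighborFinset z, (u α y' - u α z) ^ 2 = 2 * l := by
    intro α
    have hsplit : ∑ z, ∑ y' ∈ G.neighborFinset z, (u α y' - u α z) ^ 2
        = (∑ z, ∑ y' ∈ G.neighborFinset z, (u α y' - u α z) * u α y')
          - ∑ z, ∑ y' ∈ G.neighborFinset z, (u α y' - u α z) * u α z := by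
      rw [← Finset.sum_sub_distrib]
      refine Finset.sum_congr rfl fun z _ => ?_
      rw [← Finset.sum_sub_distrib]
      exact Finset.sum_congr rfl fun y' _ => by ring
    have hswap : ∑ z, ∑ y' ∈ G.neighborFinset z, (u α y' - u α z) * u α y'
        = - ∑ z, ∑ y' ∈ G.neighborFinset z, (u α y' - u α z) * u α z := by
      rw [swap_sum G (fun z y' => (u α y' - u α z) * u α y')]
      rw [← Finset.sum_neg_distrib]
      refine Finset.sum_congr rfl fun z _ => ?_
      rw [← Finset.sum_neg_distrib]
      exact Finset.sum_congr rfl fun y' _ => by ring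
    have hinner : ∑ z, ∑ y' ∈ G.neighborFinset z, (u α y' - u α z) * u α z
        = -((d : ℝ) * l) * ∑ z, u α z * u α z := by
      rw [Finset.mul_sum]
      refine Finset.sum_congr rfl fun z _ => ?_
      rw [← Finset.sum_mul, hnbr α z]
      ring
    have hone : (d : ℝ) * ∑ z, u α z * u α z = 1 := by
      simpa using horth α α
    rw [hsplit, hswap, hinner]
    linear_combination 2 * l * hone
  -- total sum two ways
  set c : ℝ := ∑ α, (u α y - u α x) ^ 2 with hcdef
  have htot1 : ∑ z, ∑ y' ∈ G.neighborFinset z, ∑ α, (u α y' - u α z) ^ 2 = (m : ℝ) * (2 * l) := by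
    have : ∑ z, ∑ y' ∈ G.neighborFinset z, ∑ α, (u α y' - u α z) ^ 2
        = ∑ α, ∑ z, ∑ y' ∈ G.neighborFinset z, (u α y' - u α z) ^ 2 := by
      rw [Finset.sum_comm]
      refine Finset.sum_congr rfl fun z _ => Finset.sum_comm
    rw [this]
    rw [Finset.sum_congr rfl fun α _ => hS α]
    simp
  have htot2 : ∑ z, ∑ y' ∈ G.neighborFinset z, ∑ α, (u α y' - u α z) ^ 2
      = c * (2 * G.edgeFinset.card) := by
    have : ∀ z : V, ∑ y' ∈ G.neighborFinset z, ∑ α, (u α y' - u α z) ^ 2 = (d : ℝ) * c := by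
      intro z
      rw [Finset.sum_congr rfl fun y' hy' =>
        hconst z y' ((SimpleGraph.mem_neighborFinset G z y').mp hy')]
      rw [Finset.sum_const, nsmul_eq_mul]
      congr 1
      exact_mod_cast hreg z
    rw [Finset.sum_congr rfl fun z _ => this z, Finset.sum_const, nsmul_eq_mul,
      Finset.card_univ]
    have hdeg : ((Fintype.card V : ℝ)) * (d : ℝ) = 2 * (G.edgeFinset.card : ℝ) := by
      have h := G.sum_degrees_eq_twice_card_edges
      rw [Finset.sum_congr rfl fun z _ => hreg z, Finset.sum_const, smul_eq_mul,
        Finset.card_univ] at h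
      exact_mod_cast h
    calc (Fintype.card V : ℝ) * ((d:ℝ) * c) = ((Fintype.card V : ℝ) * (d:ℝ)) * c := by ring
      _ = 2 * (G.edgeFinset.card : ℝ) * c := by rw [hdeg]
      _ = c * (2 * G.edgeFinset.card) := by ring
  have hcard : (0 : ℝ) < G.edgeFinset.card := by
    have : s(x, y) ∈ G.edgeFinset := by
      rw [SimpleGraph.mem_edgeFinset]
      exact hxy
    have hne : G.edgeFinset.Nonempty := ⟨_, this⟩
    exact_mod_cast Finset.card_pos.mpr hne
  rw [htot2] at htot1
  rw [eq_div_iff hcard.ne']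
  linarith [htot1]
end

section
/- Let G be a connected finite d-regular graph with N vertices and normalized Laplacian eigenvalues λ₀ ≤ λ₁ ≤ ⋯ ≤ λ_{N−1}. Then for any 0 ≤ k ≤ N−1, Σ_{i=0}^k (1 − λ_i) ≥ 0, with equality if and only if k = N−1. -/
open Finset Real

open Matrix in

lemma nbr_swap {V : Type*} [Fintype V] (G : SimpleGraph V) [DecidableRel G.Adj] (f : V → V → ℝ) :
    ∑ x, ∑ y ∈ G.neighborFinset x, f x y = ∑ y, ∑ x ∈ G.neighborFinset y, f x y := by
  simp only [SimpleGraph.neighborFinset_eq_filter, Finset.sum_filter]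
  rw [Finset.sum_comm]
  apply Finset.sum_congr rfl; intro y _
  apply Finset.sum_congr rfl; intro x _
  simp [G.adj_comm]

open Matrix in
lemma dual {V : Type*} [Fintype V] [DecidableEq V] (d : ℕ) (u : ℕ → V → ℝ)
    (horth : ∀ i j, i < Fintype.card V → j < Fintype.card V →
      (d : ℝ) * ∑ x, u i x * u j x = if i = j then 1 else 0) :
    ∀ x y : V, ∑ i ∈ Finset.range (Fintype.card V), (d:ℝ) * (u i x * u i y)
      = if x = y then 1 else 0 := by
  intro x y
  set N := Fintype.card V with hN
  set e := (Fintype.equivFin V).symm with he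
  set W : Matrix (Fin N) (Fin N) ℝ := Matrix.of fun i j => Real.sqrt d * u i (e j) with hWdef
  have hW : W * Wᵀ = 1 := by
    ext i j
    have : (W * Wᵀ) i j = ∑ k, (Real.sqrt d * u i (e k)) * (Real.sqrt d * u j (e k)) := by
      simp [Matrix.mul_apply, hWdef]
      rfl
    rw [this]
    have h2 : ∑ k, (Real.sqrt d * u i (e k)) * (Real.sqrt d * u j (e k))
        = (d : ℝ) * ∑ z, u i z * u j z := by
      rw [Finset.mul_sum]
      rw [← Equiv.sum_comp e (fun z => (d:ℝ) * (u i z * u j z))]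
      apply Finset.sum_congr rfl; intro k _
      ring_nf
      rw [Real.sq_sqrt (by positivity : (0:ℝ) ≤ (d:ℝ))]
      ring
    rw [h2, horth i j i.isLt j.isLt, Matrix.one_apply]
    simp [Fin.ext_iff]
  have hW' : Wᵀ * W = 1 := mul_eq_one_comm.mp hW
  have h2 : (Wᵀ * W) (e.symm x) (e.symm y) = (1 : Matrix (Fin N) (Fin N) ℝ) (e.symm x) (e.symm y) := by
    rw [hW']
  rw [Matrix.mul_apply] at h2
  simp only [Matrix.transpose_apply, hWdef, Matrix.of_apply, Equiv.apply_symm_apply] at h2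
  rw [Matrix.one_apply] at h2
  have h3 : ∑ i : Fin N, Real.sqrt d * u i x * (Real.sqrt d * u i y)
      = ∑ i ∈ Finset.range N, (d:ℝ) * (u i x * u i y) := by
    rw [← Fin.sum_univ_eq_sum_range (fun i => (d:ℝ) * (u i x * u i y)) N]
    apply Finset.sum_congr rfl; intro k _
    ring_nf
    rw [Real.sq_sqrt (by positivity : (0:ℝ) ≤ (d:ℝ))]
    ring
  rw [h3] at h2
  rw [h2]
  simp [EmbeddingLike.apply_eq_iff_eq]


/-- For a connected finite `d`-regular graph with normalized Laplacian eigenvalues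
`λ₀ ≤ ⋯ ≤ λ_{N−1}` (with orthonormal eigenbasis), for any `0 ≤ k ≤ N−1` one has
`Σ_{i=0}^k (1 − λ_i) ≥ 0`, with equality iff `k = N−1`. -/
theorem stmt_11 {V : Type*} [Fintype V] (G : SimpleGraph V) [DecidableRel G.Adj]
    (d : ℕ) (hd : 0 < d) (hconn : G.Connected) (hreg : ∀ x, G.degree x = d)
    (lam : ℕ → ℝ) (u : ℕ → V → ℝ)
    (hmono : ∀ i j, i ≤ j → j < Fintype.card V → lam i ≤ lam j)
    (horth : ∀ i j, i < Fintype.card V → j < Fintype.card V →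
      (d : ℝ) * ∑ x, u i x * u j x = if i = j then 1 else 0)
    (heig : ∀ i, i < Fintype.card V → ∀ x, nlap G d (u i) x + lam i * u i x = 0)
    :
    ∀ k, k < Fintype.card V →
      (0 ≤ ∑ i ∈ Finset.range (k + 1), (1 - lam i)) ∧
      ((∑ i ∈ Finset.range (k + 1), (1 - lam i)) = 0 ↔ k = Fintype.card V - 1) := by
  simp only [nlap] at heig
  classical
  set N := Fintype.card V with hN
  have hdpos : (0:ℝ) < d := by exact_mod_cast hd
  have hd' : (d:ℝ) ≠ 0 := ne_of_gt hdpos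
  have hcard : ∀ x : V, (G.neighborFinset x).card = d := fun x => by
    rw [SimpleGraph.card_neighborFinset_eq_degree]; exact hreg x
  -- action of adjacency
  have hact : ∀ i, i < N → ∀ x, ∑ y ∈ G.neighborFinset x, u i y = (d:ℝ) * ((1 - lam i) * u i x) := by
    intro i hi x
    have h := heig i hi x
    rw [Finset.sum_sub_distrib, Finset.sum_const, hcard x, nsmul_eq_mul] at h
    field_simp at h
    linarith
  have hdual := dual d u horth
  -- trace is zero
  have htr : ∑ i ∈ Finset.range N, (1 - lam i) = 0 := by
    have key : ∑ i ∈ Finset.range N, (d:ℝ) * (1 - lam i) = 0 := by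
      have lhs : ∀ i ∈ Finset.range N, (d:ℝ) * (1 - lam i)
          = ∑ x, ∑ y ∈ G.neighborFinset x, (d:ℝ) * (u i x * u i y) := by
        intro i hi
        rw [Finset.mem_range] at hi
        have : ∀ x : V, ∑ y ∈ G.neighborFinset x, (d:ℝ) * (u i x * u i y)
            = (d:ℝ) * (1 - lam i) * ((d:ℝ) * (u i x * u i x)) := by
          intro x
          have : ∑ y ∈ G.neighborFinset x, (d:ℝ) * (u i x * u i y)
              = (d:ℝ) * u i x * ∑ y ∈ G.neighborFinset x, u i y := by
            rw [Finset.mul_sum]; apply Finset.sum_congr rfl; intro y _; ring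
          rw [this, hact i hi x]; ring
        rw [Finset.sum_congr rfl (fun x _ => this x), ← Finset.mul_sum, ← Finset.mul_sum,
          horth i i hi hi]
        simp
      rw [Finset.sum_congr rfl lhs, Finset.sum_comm]
      have : ∀ x : V, ∑ i ∈ Finset.range N, ∑ y ∈ G.neighborFinset x, (d:ℝ) * (u i x * u i y)
          = 0 := by
        intro x
        rw [Finset.sum_comm]
        apply Finset.sum_eq_zero
        intro y hy
        rw [hdual x y, if_neg]
        exact G.ne_of_adj ((SimpleGraph.mem_neighborFinset _ _ _).mp hy)
      exact Finset.sum_eq_zero fun x _ => this x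
    rw [← Finset.mul_sum] at key
    exact (mul_eq_zero.mp key).resolve_left hd'
  have hNpos : 0 < N := by
    have : Nonempty V := hconn.nonempty
    exact Fintype.card_pos
  have hne : Nonempty V := Fintype.card_pos_iff.mp hNpos
  -- existence of a zero eigenvalue
  have hzero : ∃ j, j < N ∧ lam j = 0 := by
    by_contra hcon
    push_neg at hcon
    have hS : ∀ i, i < N → ∑ x, u i x = 0 := by
      intro i hi
      have hsum : ∑ x, ((1 / (d : ℝ)) * ∑ y ∈ G.neighborFinset x, (u i y - u i x) + lam i * u i x) = 0 := by
        apply Finset.sum_eq_zero; intro x _; exact heig i hi x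
      rw [Finset.sum_add_distrib, ← Finset.mul_sum, ← Finset.mul_sum] at hsum
      have hswap : ∑ x, ∑ y ∈ G.neighborFinset x, (u i y - u i x) = 0 := by
        have h1 : ∀ x : V, ∑ y ∈ G.neighborFinset x, (u i y - u i x)
            = (∑ y ∈ G.neighborFinset x, u i y) - (d:ℝ) * u i x := by
          intro x
          rw [Finset.sum_sub_distrib, Finset.sum_const, hcard x, nsmul_eq_mul]
        rw [Finset.sum_congr rfl (fun x _ => h1 x), Finset.sum_sub_distrib]
        have h2 : ∑ x, ∑ y ∈ G.neighborFinset x, u i y = ∑ x : V, (d:ℝ) * u i x := by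
          rw [nbr_swap G (fun x y => u i y)]
          apply Finset.sum_congr rfl; intro y _
          rw [Finset.sum_const, hcard y, nsmul_eq_mul]
        rw [h2]
        simp
      rw [hswap, mul_zero, zero_add] at hsum
      rcases mul_eq_zero.mp hsum with h | h
      · exact absurd h (hcon i hi)
      · exact h
    have hNzero : (N:ℝ) = 0 := by
      have h1 : ∑ x : V, ∑ y : V, (if x = y then (1:ℝ) else 0) = (N:ℝ) := by
        simp [hN]
      have h2 : ∑ x : V, ∑ y : V, ∑ i ∈ Finset.range N, (d:ℝ) * (u i x * u i y) = 0 := by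
        rw [Finset.sum_congr rfl fun x _ => Finset.sum_comm, Finset.sum_comm]
        apply Finset.sum_eq_zero
        intro i hi
        rw [Finset.mem_range] at hi
        have hrow : ∀ x : V, ∑ y : V, (d:ℝ) * (u i x * u i y) = (d:ℝ) * u i x * ∑ y, u i y := by
          intro x; rw [Finset.mul_sum]; apply Finset.sum_congr rfl; intro y _; ring
        rw [Finset.sum_congr rfl fun x _ => hrow x, hS i hi]
        simp
      rw [← h1]
      rw [Finset.sum_congr rfl fun x _ => Finset.sum_congr rfl fun y _ => (hdual x y).symm]
      exact h2
    exact absurd hNzero (by positivity)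
  -- all eigenvalues nonnegative
  have hge : ∀ i, i < N → 0 ≤ lam i := by
    intro i hi
    by_contra hlt
    push_neg at hlt
    obtain ⟨x, -, hxmax⟩ := Finset.exists_max_image Finset.univ (fun x => |u i x|) Finset.univ_nonempty
    have hx0 : 0 < |u i x| := by
      by_contra hx
      push_neg at hx
      have hall : ∀ y : V, u i y = 0 := by
        intro y
        have h1 := hxmax y (Finset.mem_univ y)
        have h2 : |u i y| ≤ 0 := le_trans h1 hx
        exact abs_eq_zero.mp (le_antisymm h2 (abs_nonneg _))
      have := horth i i hi hi
      simp [hall] at this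
    have h1 : |∑ y ∈ G.neighborFinset x, u i y| ≤ (d:ℝ) * |u i x| := by
      calc |∑ y ∈ G.neighborFinset x, u i y| ≤ ∑ y ∈ G.neighborFinset x, |u i y| :=
            Finset.abs_sum_le_sum_abs _ _
        _ ≤ ∑ y ∈ G.neighborFinset x, |u i x| :=
            Finset.sum_le_sum fun y _ => hxmax y (Finset.mem_univ y)
        _ = (d:ℝ) * |u i x| := by rw [Finset.sum_const, hcard x, nsmul_eq_mul]
    have h2 : |∑ y ∈ G.neighborFinset x, u i y| = (d:ℝ) * ((1 - lam i) * |u i x|) := by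
      rw [hact i hi x, abs_mul, abs_mul, Nat.abs_cast, abs_of_pos (by linarith : (0:ℝ) < 1 - lam i)]
    rw [h2] at h1
    have h3 : (1 - lam i) * |u i x| ≤ |u i x| := le_of_mul_le_mul_left h1 hdpos
    nlinarith [mul_pos (neg_pos.mpr hlt) hx0]
  obtain ⟨j, hjN, hj0⟩ := hzero
  have hlam0 : lam 0 = 0 :=
    le_antisymm (by simpa [hj0] using hmono 0 j (Nat.zero_le j) hjN) (hge 0 hNpos)
  -- strict positivity of partial sums below the top
  have hpos : ∀ k, k + 1 < N → 0 < ∑ i ∈ Finset.range (k + 1), (1 - lam i) := by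
    intro k hk1
    by_contra hs
    push_neg at hs
    have hsplit : (1 - lam 0) + ∑ i ∈ Finset.Ico 1 (k + 1), (1 - lam i)
        = ∑ i ∈ Finset.range (k + 1), (1 - lam i) := by
      have h := Finset.sum_Ico_consecutive (fun i => 1 - lam i)
        (Nat.zero_le 1) (by omega : 1 ≤ k + 1)
      simpa using h
    have hT : ∑ i ∈ Finset.Ico 1 (k + 1), (1 - lam i) ≤ -1 := by
      rw [hlam0] at hsplit
      linarith
    obtain ⟨i, hiIco, hineg⟩ : ∃ i ∈ Finset.Ico 1 (k + 1), 1 - lam i < 0 := by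
      by_contra h
      push_neg at h
      have : (0:ℝ) ≤ ∑ i ∈ Finset.Ico 1 (k + 1), (1 - lam i) := Finset.sum_nonneg h
      linarith
    rw [Finset.mem_Ico] at hiIco
    have hlamk : 1 < lam k := by
      have := hmono i k (by omega) (by omega)
      linarith
    have htail : ∑ j ∈ Finset.Ico (k + 1) N, (1 - lam j)
        ≤ ((N - (k + 1) : ℕ) : ℝ) * (1 - lam k) := by
      calc ∑ j ∈ Finset.Ico (k + 1) N, (1 - lam j)
          ≤ ∑ j ∈ Finset.Ico (k + 1) N, (1 - lam k) := by
            apply Finset.sum_le_sum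
            intro j hj
            rw [Finset.mem_Ico] at hj
            have := hmono k j (by omega) hj.2
            linarith
        _ = ((N - (k + 1) : ℕ) : ℝ) * (1 - lam k) := by
            rw [Finset.sum_const, Nat.card_Ico, nsmul_eq_mul]
    have hcardpos : (0:ℝ) < ((N - (k + 1) : ℕ) : ℝ) := by
      have : 1 ≤ N - (k + 1) := by omega
      exact_mod_cast Nat.lt_of_lt_of_le Nat.zero_lt_one this
    have htailneg : ((N - (k + 1) : ℕ) : ℝ) * (1 - lam k) < 0 :=
      mul_neg_of_pos_of_neg hcardpos (by linarith)
    have htotal : ∑ i ∈ Finset.range (k + 1), (1 - lam i)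
        + ∑ i ∈ Finset.Ico (k + 1) N, (1 - lam i) = ∑ i ∈ Finset.range N, (1 - lam i) := by
      have h := Finset.sum_Ico_consecutive (fun i => 1 - lam i)
        (Nat.zero_le (k + 1)) (le_of_lt hk1)
      rw [← Finset.range_eq_Ico] at h
      rwa [← Finset.range_eq_Ico] at h
    rw [htr] at htotal
    linarith
  intro k hk
  rcases eq_or_ne k (N - 1) with rfl | hnek
  · have hk1 : N - 1 + 1 = N := Nat.succ_pred_eq_of_pos hNpos
    rw [hk1, htr]
    exact ⟨le_refl 0, by simp⟩
  · have hklt : k + 1 < N := by omega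
    have hp := hpos k hklt
    refine ⟨le_of_lt hp, ?_, fun h => absurd h hnek⟩
    intro h
    rw [h] at hp
    exact absurd hp (lt_irrefl 0)
end
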